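/- Let ρ be a renaming and E a unification problem (pair of terms). Then the set of most general unifiers satisfies mgus(ρ(E)) = {ρ(σ) : σ ∈ mgus(E)}, where ρ(σ) = ρ ∘ σ ∘ ρ⁻¹ is the substitution variant. -/

import Mathlib

inductive Tm : Type
  | var : ℕ → Tm
  | fn : ℕ → List Tm → Tm

namespace Tm

def map (σ : ℕ → ℕ) : Tm → Tm
  | var x => var (σ x)
  | fn f ts => fn f (ts.attach.map fun t => t.1.map σ)
decreasing_by simp_wf; have := List.sizeOf_lt_of_mem t.2; omega

def subst (σ : ℕ → Tm) : Tm → Tm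
  | var x => σ x
  | fn f ts => fn f (ts.attach.map fun t => t.1.subst σ)
decreasing_by simp_wf; have := List.sizeOf_lt_of_mem t.2; omega

def vars : Tm → Finset ℕ
  | var x => {x}
  | fn _ ts => (ts.attach.map fun t => t.1.vars).foldr (· ∪ ·) ∅
decreasing_by simp_wf; have := List.sizeOf_lt_of_mem t.2; omega

theorem map_fn (σ : ℕ → ℕ) (f : ℕ) (ts : List Tm) :
    (fn f ts).map σ = fn f (ts.map (·.map σ)) := by
  rw [map]; simp [List.attach_map_val]

theorem subst_fn (σ : ℕ → Tm) (f : ℕ) (ts : List Tm) :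
    (fn f ts).subst σ = fn f (ts.map (·.subst σ)) := by
  rw [subst]; simp [List.attach_map_val]

theorem map_map (g f : ℕ → ℕ) : ∀ t : Tm, (t.map f).map g = t.map (fun x => g (f x))
  | var x => by simp [map]
  | fn n ts => by
    simp only [map_fn, List.map_map]
    congr 1
    apply List.map_congr_left
    intro a ha
    exact map_map g f a
decreasing_by simp_wf; have := List.sizeOf_lt_of_mem ha; omega

theorem subst_map (θ : ℕ → Tm) (f : ℕ → ℕ) :
    ∀ t : Tm, (t.map f).subst θ = t.subst (fun x => θ (f x))
  | var x => by simp [map, subst]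
  | fn n ts => by
    simp only [map_fn, subst_fn, List.map_map]
    congr 1
    apply List.map_congr_left
    intro a ha
    exact subst_map θ f a
decreasing_by simp_wf; have := List.sizeOf_lt_of_mem ha; omega

theorem map_subst (g : ℕ → ℕ) (θ : ℕ → Tm) :
    ∀ t : Tm, (t.subst θ).map g = t.subst (fun x => (θ x).map g)
  | var x => by simp [subst]
  | fn n ts => by
    simp only [map_fn, subst_fn, List.map_map]
    congr 1
    apply List.map_congr_left
    intro a ha
    exact map_subst g θ a
decreasing_by simp_wf; have := List.sizeOf_lt_of_mem ha; omega

theorem subst_subst (δ θ : ℕ → Tm) :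
    ∀ t : Tm, (t.subst θ).subst δ = t.subst (fun x => (θ x).subst δ)
  | var x => by simp [subst]
  | fn n ts => by
    simp only [subst_fn, List.map_map]
    congr 1
    apply List.map_congr_left
    intro a ha
    exact subst_subst δ θ a
decreasing_by simp_wf; have := List.sizeOf_lt_of_mem ha; omega

theorem map_id : ∀ t : Tm, t.map (fun x => x) = t
  | var x => by simp [map]
  | fn n ts => by
    simp only [map_fn]
    congr 1
    conv_rhs => rw [← List.map_id ts]
    apply List.map_congr_left
    intro a ha
    exact map_id a
decreasing_by simp_wf; have := List.sizeOf_lt_of_mem ha; omega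

theorem map_congr (f g : ℕ → ℕ) (h : ∀ x, f x = g x) (t : Tm) : t.map f = t.map g := by
  have : f = g := funext h
  rw [this]


end Tm

/-- The active domain of a substitution. -/
def SDom (σ : ℕ → Tm) : Set ℕ := {x | σ x ≠ Tm.var x}

/-- The set of variables of a substitution: Dom(σ) ∪ vars(σ(Dom σ)). -/
def varsS (σ : ℕ → Tm) : Set ℕ := SDom σ ∪ ⋃ x ∈ SDom σ, ↑(σ x).vars

/-- θ unifies s and t. -/
def IsUnifier (θ : ℕ → Tm) (s t : Tm) : Prop := s.subst θ = t.subst θ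

/-- σ is a most general unifier of s and t. -/
def IsMGU (σ : ℕ → Tm) (s t : Tm) : Prop :=
  IsUnifier σ s t ∧ ∀ θ : ℕ → Tm, IsUnifier θ s t → ∃ δ : ℕ → Tm, ∀ x, θ x = (σ x).subst δ

/-- Renaming compatibility of mgus: mgus(ρ(E)) = { ρ∘σ∘ρ⁻¹ : σ ∈ mgus(E) }. -/
theorem stmt19 (ρ ρi : ℕ → ℕ) (hfin : {x | ρ x ≠ x}.Finite)
    (hli : Function.LeftInverse ρi ρ) (hri : Function.RightInverse ρi ρ)
    (s t : Tm) :
    {σ' : ℕ → Tm | IsMGU σ' (s.map ρ) (t.map ρ)} =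
      (fun σ : ℕ → Tm => fun x => (σ (ρi x)).map ρ) '' {σ : ℕ → Tm | IsMGU σ s t} := by
  ext σ'
  simp only [Set.mem_setOf_eq, Set.mem_image]
  constructor
  · rintro ⟨hu, hm⟩
    refine ⟨fun x => (σ' (ρ x)).map ρi, ⟨?_, ?_⟩, ?_⟩
    · -- σ unifies s t
      unfold IsUnifier at hu ⊢
      have key : ∀ u : Tm, u.subst (fun x => (σ' (ρ x)).map ρi)
          = ((u.map ρ).subst σ').map ρi := by
        intro u
        rw [Tm.subst_map, Tm.map_subst]
      rw [key s, key t, hu]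
    · intro θ hθ
      have hθ' : IsUnifier (fun x => (θ (ρi x)).map ρ) (s.map ρ) (t.map ρ) := by
        unfold IsUnifier at hθ ⊢
        have key : ∀ u : Tm, (u.map ρ).subst (fun x => (θ (ρi x)).map ρ)
            = (u.subst θ).map ρ := by
          intro u
          rw [Tm.subst_map, Tm.map_subst]
          congr 1
          funext x
          rw [hli x]
        rw [key s, key t, hθ]
      obtain ⟨δ', hδ'⟩ := hm _ hθ'
      refine ⟨fun x => (δ' (ρ x)).map ρi, fun x => ?_⟩
      rw [Tm.subst_map, show (fun y => (δ' (ρ (ρi y))).map ρi) = fun y => (δ' y).map ρi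
          from funext fun y => by rw [hri y],
        ← Tm.map_subst, ← hδ' (ρ x), Tm.map_map,
        show (fun y => ρi (ρ y)) = fun y => y from funext fun y => hli y, Tm.map_id, hli x]
    · funext x
      rw [Tm.map_map, show (fun y => ρ (ρi y)) = fun y => y from funext fun y => hri y,
        Tm.map_id, hri x]
  · rintro ⟨σ, ⟨hu, hm⟩, rfl⟩
    constructor
    · unfold IsUnifier at hu ⊢
      have key : ∀ u : Tm, (u.map ρ).subst (fun x => (σ (ρi x)).map ρ)
          = (u.subst σ).map ρ := by
        intro u
        rw [Tm.subst_map, Tm.map_subst]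
        congr 1
        funext x
        rw [hli x]
      rw [key s, key t, hu]
    · intro θ' hθ'
      have hθ : IsUnifier (fun x => (θ' (ρ x)).map ρi) s t := by
        unfold IsUnifier at hθ' ⊢
        have key : ∀ u : Tm, u.subst (fun x => (θ' (ρ x)).map ρi)
            = ((u.map ρ).subst θ').map ρi := by
          intro u
          rw [Tm.subst_map, Tm.map_subst]
        rw [key s, key t, hθ']
      obtain ⟨δ, hδ⟩ := hm _ hθ
      refine ⟨fun x => (δ (ρi x)).map ρ, fun x => ?_⟩
      rw [Tm.subst_map, show (fun y => (δ (ρi (ρ y))).map ρ) = fun y => (δ y).map ρ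
          from funext fun y => by rw [hli y],
        ← Tm.map_subst, ← hδ (ρi x), Tm.map_map,
        show (fun y => ρ (ρi y)) = fun y => y from funext fun y => hri y, Tm.map_id, hri x]
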